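/- Let σ ∈ (3/4, 1), ξ₁ ∈ (0, 1 − σ) and χ ∈ (0, (1 − σ)/2). For s > 0 let χ₁(s) be the smallest even integer ≥ s(1 − s^{−χ}), let χ₂(s) be the largest odd integer ≤ s(1 + s^{−χ}), and set K(s) := {l ∈ ℕ : χ₁(s) ≤ l ≤ χ₂(s)}. Then for every θ > 0: lim_{t→∞} t^{θ} e^{t^{σ}} Σ_{l ∈ ℕ₀, l ∉ K(t − 2 t^{ξ₁})} e^{−(t − 2 t^{ξ₁})} (t − 2 t^{ξ₁})^l / l! = 0. (Superpolynomial Poisson concentration; Claim 6.5 / the claim used in the proof of Lemma 5.3, Part 3.) -/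
import Mathlib


open scoped BigOperators

noncomputable section

lemma tsum_pow_div_fact (x : ℝ) : ∑' n : ℕ, x ^ n / (n.factorial : ℝ) = Real.exp x := by
  rw [Real.exp_eq_exp_ℝ, NormedSpace.exp_eq_tsum_div]

lemma summable_poisson (s c : ℝ) :
    Summable (fun l : ℕ => Real.exp c * s ^ l / (l.factorial : ℝ)) := by
  simpa [mul_div_assoc] using (Real.summable_pow_div_factorial s).mul_left (Real.exp c)

lemma chernoff_upper (s h a : ℝ) (hs : 0 ≤ s) (hh : 0 ≤ h) :
    ∑' l : ℕ, Set.indicator {l : ℕ | a ≤ (l : ℝ)}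
        (fun l : ℕ => Real.exp (-s) * s ^ l / (l.factorial : ℝ)) l
      ≤ Real.exp (s * Real.exp h - s - h * a) := by
  set f : ℕ → ℝ := fun l => Real.exp (-s) * s ^ l / (l.factorial : ℝ) with hf
  set g : ℕ → ℝ := fun l => Real.exp (-s - h * a) * (s * Real.exp h) ^ l / (l.factorial : ℝ)
    with hgdef
  have hg : Summable g := summable_poisson _ _
  have hle : ∀ l : ℕ, Set.indicator {l : ℕ | a ≤ (l : ℝ)} f l ≤ g l := by
    intro l
    have hg0 : 0 ≤ g l := by
      apply div_nonneg _ (by positivity)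
      exact mul_nonneg (Real.exp_nonneg _) (pow_nonneg (by positivity) _)
    by_cases hl : l ∈ {l : ℕ | a ≤ (l : ℝ)}
    · rw [Set.indicator_of_mem hl]
      have hgl : g l = Real.exp (-s - h * a + h * l) * s ^ l / (l.factorial : ℝ) := by
        rw [hgdef]
        simp only [mul_pow]
        rw [← Real.exp_nat_mul, Real.exp_add]
        ring_nf
      rw [hgl, hf]
      have hee : Real.exp (-s) ≤ Real.exp (-s - h * a + h * l) := by
        apply Real.exp_le_exp.2
        have := mul_le_mul_of_nonneg_left hl.out hh
        linarith
      exact div_le_div_of_nonneg_right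
        (mul_le_mul_of_nonneg_right hee (pow_nonneg hs l)) (Nat.cast_nonneg _)
    · rw [Set.indicator_of_notMem hl]; exact hg0
  have htg : ∑' l, g l = Real.exp (s * Real.exp h - s - h * a) := by
    rw [hgdef]
    simp_rw [mul_div_assoc]
    rw [tsum_mul_left, tsum_pow_div_fact, ← Real.exp_add]
    ring_nf
  calc ∑' l, Set.indicator {l : ℕ | a ≤ (l : ℝ)} f l
      ≤ ∑' l, g l := Summable.tsum_le_tsum hle ((summable_poisson s (-s)).indicator _) hg
    _ = _ := htg

lemma chernoff_lower (s h a : ℝ) (hs : 0 ≤ s) (hh : 0 ≤ h) :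
    ∑' l : ℕ, Set.indicator {l : ℕ | (l : ℝ) ≤ a}
        (fun l : ℕ => Real.exp (-s) * s ^ l / (l.factorial : ℝ)) l
      ≤ Real.exp (s * Real.exp (-h) - s + h * a) := by
  set f : ℕ → ℝ := fun l => Real.exp (-s) * s ^ l / (l.factorial : ℝ) with hf
  set g : ℕ → ℝ := fun l => Real.exp (-s + h * a) * (s * Real.exp (-h)) ^ l / (l.factorial : ℝ)
    with hgdef
  have hg : Summable g := summable_poisson _ _
  have hle : ∀ l : ℕ, Set.indicator {l : ℕ | (l : ℝ) ≤ a} f l ≤ g l := by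
    intro l
    have hg0 : 0 ≤ g l := by
      apply div_nonneg _ (by positivity)
      exact mul_nonneg (Real.exp_nonneg _) (pow_nonneg (by positivity) _)
    by_cases hl : l ∈ {l : ℕ | (l : ℝ) ≤ a}
    · rw [Set.indicator_of_mem hl]
      have hgl : g l = Real.exp (-s + h * a + (-h) * l) * s ^ l / (l.factorial : ℝ) := by
        rw [hgdef]
        simp only [mul_pow]
        rw [← Real.exp_nat_mul]
        simp only [Real.exp_add, mul_neg, neg_mul, Real.exp_neg]
        ring_nf
      rw [hgl, hf]
      have hee : Real.exp (-s) ≤ Real.exp (-s + h * a + (-h) * l) := by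
        apply Real.exp_le_exp.2
        have := mul_le_mul_of_nonneg_left hl.out hh
        linarith
      exact div_le_div_of_nonneg_right
        (mul_le_mul_of_nonneg_right hee (pow_nonneg hs l)) (Nat.cast_nonneg _)
    · rw [Set.indicator_of_notMem hl]; exact hg0
  have htg : ∑' l, g l = Real.exp (s * Real.exp (-h) - s + h * a) := by
    rw [hgdef]
    simp_rw [mul_div_assoc]
    rw [tsum_mul_left, tsum_pow_div_fact, ← Real.exp_add]
    ring_nf
  calc ∑' l, Set.indicator {l : ℕ | (l : ℝ) ≤ a} f l
      ≤ ∑' l, g l := Summable.tsum_le_tsum hle ((summable_poisson s (-s)).indicator _) hg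
    _ = _ := htg

lemma exp_quad_bound {x : ℝ} (hx : |x| ≤ 1) : Real.exp x ≤ 1 + x + 3/2 * x^2 := by
  have h := Real.exp_bound hx (n := 2) (by norm_num)
  have h2 := abs_sub_le_iff.1 h
  simp [Finset.sum_range_succ] at h2
  nlinarith [h2.1, abs_nonneg x, sq_abs x]


/-- The smallest even integer `≥ a`. -/
def evenCeil (a : ℝ) : ℤ := 2 * ⌈a / 2⌉

/-- The largest odd integer `≤ a`. -/
def oddFloor (a : ℝ) : ℤ := 2 * ⌊(a - 1) / 2⌋ + 1

/-- The window `K(s) = {l ∈ ℕ : χ₁(s) ≤ l ≤ χ₂(s)}`, where `χ₁(s)` is the smallest even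
integer `≥ s(1 − s^{−χ})` and `χ₂(s)` is the largest odd integer `≤ s(1 + s^{−χ})`. -/
def Kwin (χ s : ℝ) : Set ℕ :=
  {l : ℕ | evenCeil (s * (1 - s ^ (-χ))) ≤ (l : ℤ) ∧ (l : ℤ) ≤ oddFloor (s * (1 + s ^ (-χ)))}

lemma tail_bound (χ s : ℝ) (hχ : 0 < χ) (hs1 : 1 ≤ s) (hs2 : 2 ≤ s ^ (1 - χ)) :
    ∑' l : {l : ℕ // l ∉ Kwin χ s},
        Real.exp (-s) * s ^ (l : ℕ) / (((l : ℕ).factorial : ℝ))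
      ≤ 2 * Real.exp (-(s ^ (1 - 2 * χ)) / 24) := by
  have hs0 : (0 : ℝ) < s := lt_of_lt_of_le one_pos hs1
  set δ : ℝ := s ^ (-χ) with hδdef
  have hδ0 : 0 < δ := Real.rpow_pos_of_pos hs0 _
  have hδ1 : δ ≤ 1 := Real.rpow_le_one_of_one_le_of_nonpos hs1 (by linarith)
  have hsδ : s * δ = s ^ (1 - χ) := by
    rw [hδdef, show (1 - χ) = 1 + (-χ) by ring, Real.rpow_add hs0, Real.rpow_one]
  have hsδ2 : s * δ ^ 2 = s ^ (1 - 2 * χ) := by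
    have h2 : δ ^ 2 = s ^ (-χ) * s ^ (-χ) := by rw [hδdef]; ring
    rw [h2, ← Real.rpow_add hs0, show -χ + -χ = -(2 * χ) by ring,
      show (1 - 2 * χ) = 1 + -(2 * χ) by ring, Real.rpow_add hs0, Real.rpow_one]
  have hsδge : 2 ≤ s * δ := hsδ ▸ hs2
  set f : ℕ → ℝ := fun l => Real.exp (-s) * s ^ l / (l.factorial : ℝ) with hf
  have hf0 : ∀ l, 0 ≤ f l := fun l =>
    div_nonneg (mul_nonneg (Real.exp_nonneg _) (pow_nonneg hs0.le _)) (Nat.cast_nonneg _)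
  set A : Set ℕ := {l : ℕ | (l : ℝ) ≤ s * (1 - δ / 2)} with hA
  set B : Set ℕ := {l : ℕ | s * (1 + δ / 2) ≤ (l : ℝ)} with hB
  have hSf : Summable f := summable_poisson s (-s)
  -- step 1 : subtype sum to indicator
  have step1 : ∑' l : {l : ℕ // l ∉ Kwin χ s},
      Real.exp (-s) * s ^ (l : ℕ) / (((l : ℕ).factorial : ℝ))
      = ∑' l : ℕ, Set.indicator (Kwin χ s)ᶜ f l := tsum_subtype ((Kwin χ s)ᶜ) f
  -- step 2 : pointwise bound
  have step2 : ∀ l : ℕ, Set.indicator (Kwin χ s)ᶜ f l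
      ≤ Set.indicator A f l + Set.indicator B f l := by
    intro l
    by_cases hm : l ∈ (Kwin χ s)ᶜ
    · rw [Set.indicator_of_mem hm]
      have hmem : l ∈ A ∨ l ∈ B := by
        rcases not_and_or.1 hm with hc | hc
        · left
          push_neg at hc
          rw [← hδdef] at hc
          have hlZ : (l : ℤ) ≤ evenCeil (s * (1 - δ)) - 1 := by omega
          have hceil : ((evenCeil (s * (1 - δ)) : ℤ) : ℝ) < s * (1 - δ) + 2 := by
            unfold evenCeil
            push_cast
            have := Int.ceil_lt_add_one (s * (1 - δ) / 2)
            linarith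
          have hlR : (l : ℝ) ≤ ((evenCeil (s * (1 - δ)) : ℤ) : ℝ) - 1 := by
            exact_mod_cast hlZ
          show (l : ℝ) ≤ s * (1 - δ / 2)
          nlinarith
        · right
          push_neg at hc
          rw [← hδdef] at hc
          have hlZ : oddFloor (s * (1 + δ)) + 1 ≤ (l : ℤ) := by omega
          have hfl : s * (1 + δ) - 2 < ((oddFloor (s * (1 + δ)) : ℤ) : ℝ) := by
            unfold oddFloor
            push_cast
            have := Int.sub_one_lt_floor ((s * (1 + δ) - 1) / 2)
            linarith
          have hlR : ((oddFloor (s * (1 + δ)) : ℤ) : ℝ) + 1 ≤ (l : ℝ) := by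
            exact_mod_cast hlZ
          show s * (1 + δ / 2) ≤ (l : ℝ)
          nlinarith
      rcases hmem with hmA | hmB
      · rw [Set.indicator_of_mem hmA]
        have : 0 ≤ Set.indicator B f l := Set.indicator_nonneg (fun x _ => hf0 x) l
        linarith
      · rw [Set.indicator_of_mem hmB]
        have : 0 ≤ Set.indicator A f l := Set.indicator_nonneg (fun x _ => hf0 x) l
        linarith
    · rw [Set.indicator_of_notMem hm]
      have h1 : 0 ≤ Set.indicator A f l := Set.indicator_nonneg (fun x _ => hf0 x) l
      have h2 : 0 ≤ Set.indicator B f l := Set.indicator_nonneg (fun x _ => hf0 x) l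
      linarith
  -- step 3 : apply Chernoff
  have hh0 : (0 : ℝ) ≤ δ / 6 := by linarith
  have cU := chernoff_upper s (δ / 6) (s * (1 + δ / 2)) hs0.le hh0
  have cL := chernoff_lower s (δ / 6) (s * (1 - δ / 2)) hs0.le hh0
  have hq : Real.exp (δ / 6) ≤ 1 + δ / 6 + 3 / 2 * (δ / 6) ^ 2 :=
    exp_quad_bound (by rw [abs_of_nonneg hh0]; linarith)
  have hqm : Real.exp (-(δ / 6)) ≤ 1 + -(δ / 6) + 3 / 2 * (δ / 6) ^ 2 := by
    have := exp_quad_bound (x := -(δ / 6)) (by rw [abs_neg, abs_of_nonneg hh0]; linarith)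
    simpa using this
  have hEU : s * Real.exp (δ / 6) - s - δ / 6 * (s * (1 + δ / 2))
      ≤ -(s ^ (1 - 2 * χ)) / 24 := by
    have := mul_le_mul_of_nonneg_left hq hs0.le
    nlinarith [hsδ2, sq_nonneg δ, hδ0.le]
  have hEL : s * Real.exp (-(δ / 6)) - s + δ / 6 * (s * (1 - δ / 2))
      ≤ -(s ^ (1 - 2 * χ)) / 24 := by
    have := mul_le_mul_of_nonneg_left hqm hs0.le
    nlinarith [hsδ2, sq_nonneg δ, hδ0.le]
  -- combine
  rw [step1]
  calc ∑' l : ℕ, Set.indicator (Kwin χ s)ᶜ f l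
      ≤ ∑' l : ℕ, (Set.indicator A f l + Set.indicator B f l) :=
        Summable.tsum_le_tsum step2 (hSf.indicator _) ((hSf.indicator A).add (hSf.indicator B))
    _ = (∑' l : ℕ, Set.indicator A f l) + ∑' l : ℕ, Set.indicator B f l :=
        Summable.tsum_add (hSf.indicator A) (hSf.indicator B)
    _ ≤ Real.exp (s * Real.exp (-(δ / 6)) - s + δ / 6 * (s * (1 - δ / 2)))
        + Real.exp (s * Real.exp (δ / 6) - s - δ / 6 * (s * (1 + δ / 2))) := add_le_add cL cU
    _ ≤ Real.exp (-(s ^ (1 - 2 * χ)) / 24) + Real.exp (-(s ^ (1 - 2 * χ)) / 24) :=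
        add_le_add (Real.exp_le_exp.2 hEL) (Real.exp_le_exp.2 hEU)
    _ = 2 * Real.exp (-(s ^ (1 - 2 * χ)) / 24) := by ring

/-- Superpolynomial Poisson concentration: for every `θ > 0`,
`t^θ e^{t^σ} Σ_{l ∉ K(t − 2t^{ξ₁})} e^{−(t−2t^{ξ₁})} (t−2t^{ξ₁})^l / l! → 0` as `t → ∞`. -/
theorem stmt16 (σ ξ₁ χ : ℝ) (hσ0 : 3 / 4 < σ) (hσ1 : σ < 1)
    (hξ0 : 0 < ξ₁) (hξ1 : ξ₁ < 1 - σ) (hχ0 : 0 < χ) (hχ1 : χ < (1 - σ) / 2)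
    (θ : ℝ) (hθ : 0 < θ) :
    Filter.Tendsto
      (fun t : ℝ => t ^ θ * Real.exp (t ^ σ) *
        ∑' l : {l : ℕ // l ∉ Kwin χ (t - 2 * t ^ ξ₁)},
          Real.exp (-(t - 2 * t ^ ξ₁)) * (t - 2 * t ^ ξ₁) ^ (l : ℕ) /
            (((l : ℕ).factorial : ℝ)))
      Filter.atTop (nhds 0) := by
  set η : ℝ := 1 - 2 * χ with hηdef
  have hησ : σ < η := by rw [hηdef]; linarith
  have hη0 : 0 < η := by linarith
  have hη1 : η ≤ 1 := by rw [hηdef]; linarith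
  set c : ℝ := ((2 : ℝ) ^ η)⁻¹ / 24 with hcdef
  have hc0 : 0 < c := by
    rw [hcdef]
    have : (0:ℝ) < (2:ℝ) ^ η := Real.rpow_pos_of_pos two_pos _
    positivity
  set G : ℝ → ℝ := fun t => 2 * Real.exp (θ * Real.log t + t ^ σ - c * t ^ η) with hGdef
  -- eventually t/2 ≤ t - 2 t^ξ₁
  have h14 : ∀ᶠ t : ℝ in Filter.atTop, t ^ (ξ₁ - 1) < 1 / 4 := by
    have h := tendsto_rpow_neg_atTop (show (0:ℝ) < 1 - ξ₁ by linarith)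
    simp only [show -(1 - ξ₁) = ξ₁ - 1 by ring] at h
    exact h.eventually_lt_const (by norm_num)
  have hhalf : ∀ᶠ t : ℝ in Filter.atTop, t / 2 ≤ t - 2 * t ^ ξ₁ := by
    filter_upwards [h14, Filter.eventually_ge_atTop (1:ℝ)] with t h4 h1
    have ht0 : (0:ℝ) < t := lt_of_lt_of_le one_pos h1
    have hpow : t ^ (ξ₁ - 1) * t = t ^ ξ₁ := by
      rw [Real.rpow_sub ht0, Real.rpow_one]
      field_simp
    have := mul_le_mul_of_nonneg_right h4.le ht0.le
    nlinarith
  have hstop : Filter.Tendsto (fun t : ℝ => t - 2 * t ^ ξ₁) Filter.atTop Filter.atTop := by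
    apply Filter.tendsto_atTop_mono' _ hhalf
    exact Filter.Tendsto.atTop_div_const (by norm_num) Filter.tendsto_id
  have hs1 : ∀ᶠ t : ℝ in Filter.atTop, 1 ≤ t - 2 * t ^ ξ₁ := hstop.eventually_ge_atTop 1
  have hs2 : ∀ᶠ t : ℝ in Filter.atTop, 2 ≤ (t - 2 * t ^ ξ₁) ^ (1 - χ) :=
    ((tendsto_rpow_atTop (by linarith : (0:ℝ) < 1 - χ)).comp hstop).eventually_ge_atTop 2
  -- nonnegativity
  have hF0 : ∀ᶠ t : ℝ in Filter.atTop, 0 ≤ t ^ θ * Real.exp (t ^ σ) *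
      ∑' l : {l : ℕ // l ∉ Kwin χ (t - 2 * t ^ ξ₁)},
        Real.exp (-(t - 2 * t ^ ξ₁)) * (t - 2 * t ^ ξ₁) ^ (l : ℕ) /
          (((l : ℕ).factorial : ℝ)) := by
    filter_upwards [hs1, Filter.eventually_ge_atTop (0:ℝ)] with t hst1 ht0
    have hsnn : (0:ℝ) ≤ t - 2 * t ^ ξ₁ := by linarith
    have hT : 0 ≤ ∑' l : {l : ℕ // l ∉ Kwin χ (t - 2 * t ^ ξ₁)},
        Real.exp (-(t - 2 * t ^ ξ₁)) * (t - 2 * t ^ ξ₁) ^ (l : ℕ) /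
          (((l : ℕ).factorial : ℝ)) := by
      apply tsum_nonneg
      intro l
      exact div_nonneg (mul_nonneg (Real.exp_nonneg _) (pow_nonneg hsnn _)) (Nat.cast_nonneg _)
    have h1 : (0:ℝ) ≤ t ^ θ := Real.rpow_nonneg ht0 θ
    positivity
  -- comparison
  have hFG : ∀ᶠ t : ℝ in Filter.atTop, t ^ θ * Real.exp (t ^ σ) *
      (∑' l : {l : ℕ // l ∉ Kwin χ (t - 2 * t ^ ξ₁)},
        Real.exp (-(t - 2 * t ^ ξ₁)) * (t - 2 * t ^ ξ₁) ^ (l : ℕ) /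
          (((l : ℕ).factorial : ℝ))) ≤ G t := by
    filter_upwards [Filter.eventually_ge_atTop (1:ℝ), hs1, hhalf, hs2] with t ht1 hst1 hsth hst2
    have ht0 : (0:ℝ) < t := lt_of_lt_of_le one_pos ht1
    have tb := tail_bound χ (t - 2 * t ^ ξ₁) hχ0 hst1 hst2
    have hnn : (0:ℝ) ≤ t ^ θ * Real.exp (t ^ σ) := by
      have := Real.rpow_nonneg ht0.le θ
      positivity
    have hrpow : t ^ η * ((2:ℝ) ^ η)⁻¹ ≤ (t - 2 * t ^ ξ₁) ^ η := by
      have h1 : (t / 2) ^ η ≤ (t - 2 * t ^ ξ₁) ^ η :=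
        Real.rpow_le_rpow (by positivity) hsth hη0.le
      have h2 : (t / 2) ^ η = t ^ η / (2:ℝ) ^ η := Real.div_rpow ht0.le (by norm_num) η
      rw [h2, div_eq_mul_inv] at h1
      exact h1
    calc t ^ θ * Real.exp (t ^ σ) *
        (∑' l : {l : ℕ // l ∉ Kwin χ (t - 2 * t ^ ξ₁)},
          Real.exp (-(t - 2 * t ^ ξ₁)) * (t - 2 * t ^ ξ₁) ^ (l : ℕ) /
            (((l : ℕ).factorial : ℝ)))
        ≤ t ^ θ * Real.exp (t ^ σ) *
            (2 * Real.exp (-((t - 2 * t ^ ξ₁) ^ (1 - 2*χ)) / 24)) :=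
          mul_le_mul_of_nonneg_left tb hnn
      _ ≤ t ^ θ * Real.exp (t ^ σ) * (2 * Real.exp (-(t ^ η * ((2:ℝ) ^ η)⁻¹) / 24)) := by
          apply mul_le_mul_of_nonneg_left _ hnn
          have : Real.exp (-((t - 2 * t ^ ξ₁) ^ (1 - 2*χ)) / 24)
              ≤ Real.exp (-(t ^ η * ((2:ℝ) ^ η)⁻¹) / 24) := by
            apply Real.exp_le_exp.2
            rw [hηdef] at hrpow ⊢
            linarith
          linarith
      _ = G t := by
          rw [hGdef]
          simp only
          rw [Real.rpow_def_of_pos ht0, hcdef,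
            show θ * Real.log t + t ^ σ - ((2:ℝ) ^ η)⁻¹ / 24 * t ^ η =
              Real.log t * θ + t ^ σ + -(t ^ η * ((2:ℝ) ^ η)⁻¹) / 24 by ring,
            Real.exp_add, Real.exp_add]
          ring
  -- G tends to zero
  have hG : Filter.Tendsto G Filter.atTop (nhds 0) := by
    have hbr : Filter.Tendsto
        (fun t : ℝ => θ * (Real.log t / t ^ η) + t ^ (σ - η) - c)
        Filter.atTop (nhds (θ * 0 + 0 - c)) := by
      apply Filter.Tendsto.sub_const
      apply Filter.Tendsto.add
      · exact ((isLittleO_log_rpow_atTop hη0).tendsto_div_nhds_zero).const_mul θ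
      · have := tendsto_rpow_neg_atTop (show (0:ℝ) < η - σ by linarith)
        simpa [show -(η - σ) = σ - η by ring] using this
    have hbrneg : θ * 0 + 0 - c < 0 := by simpa using hc0
    have key : Filter.Tendsto
        (fun t : ℝ => t ^ η * (θ * (Real.log t / t ^ η) + t ^ (σ - η) - c))
        Filter.atTop Filter.atBot :=
      Filter.Tendsto.atTop_mul_neg hbrneg (tendsto_rpow_atTop hη0) hbr
    have hEtop : Filter.Tendsto (fun t : ℝ => θ * Real.log t + t ^ σ - c * t ^ η)
        Filter.atTop Filter.atBot := by
      apply key.congr'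
      filter_upwards [Filter.eventually_gt_atTop (0:ℝ)] with t ht0
      have htη : (0:ℝ) < t ^ η := Real.rpow_pos_of_pos ht0 η
      have h1 : t ^ η * (Real.log t / t ^ η) = Real.log t := by
        field_simp
      have h2 : t ^ η * t ^ (σ - η) = t ^ σ := by
        rw [← Real.rpow_add ht0]; ring_nf
      calc t ^ η * (θ * (Real.log t / t ^ η) + t ^ (σ - η) - c)
          = θ * (t ^ η * (Real.log t / t ^ η)) + t ^ η * t ^ (σ - η) - c * t ^ η := by ring
        _ = θ * Real.log t + t ^ σ - c * t ^ η := by rw [h1, h2]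
    have := (Real.tendsto_exp_atBot.comp hEtop).const_mul (2:ℝ)
    simpa [hGdef, Function.comp] using this
  exact squeeze_zero' hF0 hFG hG
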